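/- Let d ≥ 1 be a natural number and let N, D be real numbers with D > 0 and N ≥ D + d. Then ∑_{j=1}^{d} (D/(N − j)) · ∏_{k=1}^{j−1} (N − D − k)/(N − k) ≥ ((N − d + 1)/N) · (1 − ((N − D − d + 1)/(N − d + 1))^{d}). -/

import Mathlib

theorem stmt_9 (d : ℕ) (hd : 1 ≤ d) (N D : ℝ) (hD : 0 < D) (hN : D + (d : ℝ) ≤ N) :
    ((N - (d : ℝ) + 1) / N) * (1 - ((N - D - (d : ℝ) + 1) / (N - (d : ℝ) + 1)) ^ d) ≤
      ∑ j ∈ Finset.Icc 1 d, (D / (N - (j : ℝ))) *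
        ∏ k ∈ Finset.Icc 1 (j - 1), (N - D - (k : ℝ)) / (N - (k : ℝ)) := by
  have hd' : (1:ℝ) ≤ (d:ℝ) := by exact_mod_cast hd
  have hN1 : (0:ℝ) < N - d + 1 := by linarith
  have hNpos : (0:ℝ) < N := by linarith
  obtain ⟨r, hr⟩ : ∃ r : ℝ, r = (N - D - (d:ℝ) + 1) / (N - (d:ℝ) + 1) := ⟨_, rfl⟩
  rw [← hr]
  have hr0 : 0 ≤ r := by rw [hr]; exact div_nonneg (by linarith) hN1.le
  have key : ((N - (d:ℝ) + 1) / N) * (1 - r ^ d)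
      = (D / N) * ∑ i ∈ Finset.range d, r ^ i := by
    have h2 : 1 - r ^ d = (1 - r) * ∑ i ∈ Finset.range d, r ^ i := by
      linear_combination geom_sum_mul r d
    have h1 : 1 - r = D / (N - (d:ℝ) + 1) := by
      rw [hr]; field_simp; ring
    have h3 : (N - (d:ℝ) + 1) / N * (D / (N - (d:ℝ) + 1)) = D / N := by
      field_simp
    rw [h2, h1, ← mul_assoc, h3]
  rw [key]
  have hsum : ∑ j ∈ Finset.Icc 1 d, (D / N) * r ^ (j - 1)
      = (D / N) * ∑ i ∈ Finset.range d, r ^ i := by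
    rw [Finset.mul_sum, show Finset.Icc 1 d = Finset.Ico 1 (d+1) from (Finset.Ico_add_one_right_eq_Icc 1 d).symm,
      Finset.sum_Ico_eq_sum_range]
    simp
  rw [← hsum]
  apply Finset.sum_le_sum
  intro j hj
  rw [Finset.mem_Icc] at hj
  obtain ⟨hj1, hjd⟩ := hj
  have hjR : (j:ℝ) ≤ (d:ℝ) := by exact_mod_cast hjd
  have hNj : (0:ℝ) < N - j := by linarith
  have hprod : r ^ (j - 1) ≤ ∏ k ∈ Finset.Icc 1 (j - 1), (N - D - (k:ℝ)) / (N - (k:ℝ)) := by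
    have hcard : (Finset.Icc 1 (j - 1)).card = j - 1 := by
      rw [Nat.card_Icc]; omega
    calc r ^ (j - 1) = ∏ _k ∈ Finset.Icc 1 (j - 1), r := by rw [Finset.prod_const, hcard]
    _ ≤ ∏ k ∈ Finset.Icc 1 (j - 1), (N - D - (k:ℝ)) / (N - (k:ℝ)) := by
        apply Finset.prod_le_prod (fun _ _ => hr0)
        intro k hk
        rw [Finset.mem_Icc] at hk
        have hk2 : k + 1 ≤ d := by omega
        have hkR : (k:ℝ) + 1 ≤ (d:ℝ) := by exact_mod_cast hk2
        have hNk : (0:ℝ) < N - k := by linarith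
        rw [hr, div_le_div_iff₀ hN1 hNk]
        nlinarith [mul_nonneg hD.le (show (0:ℝ) ≤ (d:ℝ) - 1 - k by linarith)]
  have h1 : D / N ≤ D / (N - j) := by
    apply div_le_div_of_nonneg_left hD.le hNj
    linarith
  exact mul_le_mul h1 hprod (pow_nonneg hr0 _) (div_nonneg hD.le hNj.le)
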